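/- Let k be a field, d a positive natural number, and R = k[x_1,…,x_t, y_1,…,y_s] the polynomial ring in t + s variables; let M ⊆ R be the ideal generated by all the variables. Suppose h_1,…,h_s and h'_1,…,h'_s are polynomials in the variables x_1,…,x_t only, each with zero constant term and total degree at most d − 1. If the ideal of R generated by {y_1 + h_1,…, y_s + h_s} together with M^d equals the ideal generated by {y_1 + h'_1,…, y_s + h'_s} together with M^d, then h_i = h'_i for every i. -/

import Mathlib

open MvPolynomial

lemma mem_span_X_of_constantCoeff_eq_zero {σ R : Type*} [CommRing R]
    {p : MvPolynomial σ R} (hp : constantCoeff p = 0) :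
    p ∈ Ideal.span (Set.range (X : σ → MvPolynomial σ R)) := by
  rw [← Set.image_univ, mem_ideal_span_X_image]
  intro m hm
  by_contra hc
  push_neg at hc
  have : m = 0 := Finsupp.ext fun i => by simpa using hc i (Set.mem_univ i)
  rw [mem_support_iff, this] at hm
  exact hm hp

lemma coeff_eq_zero_of_mem_pow_span_X {σ R : Type*} [CommRing R]
    (d : ℕ) {p : MvPolynomial σ R}
    (hp : p ∈ (Ideal.span (Set.range (X : σ → MvPolynomial σ R))) ^ d)
    {n : σ →₀ ℕ} (hn : (n.sum fun _ e => e) < d) : coeff n p = 0 := by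
  classical
  induction d generalizing p n with
  | zero => omega
  | succ d ih =>
    rw [pow_succ] at hp
    refine Submodule.mul_induction_on hp (fun a ha b hb => ?_)
      (fun a b iha ihb => by rw [coeff_add, iha, ihb, add_zero])
    · rw [coeff_mul]
      refine Finset.sum_eq_zero fun x hx => ?_
      rw [Finset.HasAntidiagonal.mem_antidiagonal] at hx
      have hsum : (x.1.sum fun _ e => e) + (x.2.sum fun _ e => e) = n.sum fun _ e => e := by
        rw [← Finsupp.sum_add_index (by simp) (by simp), hx]
      by_cases hx1 : (x.1.sum fun _ e => e) < d
      · rw [ih ha hx1, zero_mul]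
      · have : (x.2.sum fun _ e => e) = 0 := by omega
        have hx2 : x.2 = 0 := by
          rw [Finsupp.sum] at this
          ext i
          by_cases hi : i ∈ x.2.support
          · exact (Finset.sum_eq_zero_iff.mp this) i hi
          · simpa using hi
        have hb0 : constantCoeff b = 0 := by
          have : Ideal.span (Set.range (X : σ → MvPolynomial σ R)) ≤
              RingHom.ker (constantCoeff (σ := σ) (R := R)) := by
            rw [Ideal.span_le]
            rintro _ ⟨i, rfl⟩
            simp [RingHom.mem_ker]
          simpa [RingHom.mem_ker] using this hb
        have hcb : coeff 0 b = constantCoeff b := rfl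
        rw [hx2, hcb, hb0, mul_zero]

/-- Uniqueness of the generators `y_i + h_i`: if `h_i, h'_i` are polynomials in the
`x`-variables only, with zero constant term and total degree `≤ d - 1`, and the ideals
`(y_1 + h_1, …, y_s + h_s) + M^d` and `(y_1 + h'_1, …, y_s + h'_s) + M^d` coincide
(`M` being the ideal of all variables), then `h_i = h'_i` for all `i`. -/
theorem stmt_8 (k : Type*) [Field k] (d s t : ℕ) (hd : 0 < d)
    (h h' : Fin s → MvPolynomial (Fin t) k)
    (h0 : ∀ i, constantCoeff (h i) = 0)
    (h0' : ∀ i, constantCoeff (h' i) = 0)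
    (hdeg : ∀ i, (h i).totalDegree ≤ d - 1)
    (hdeg' : ∀ i, (h' i).totalDegree ≤ d - 1)
    (heq :
      Ideal.span (Set.range fun i : Fin s =>
          (X (Sum.inr i) : MvPolynomial (Fin t ⊕ Fin s) k)
            + rename Sum.inl (h i))
        + (Ideal.span (Set.range
            (X : Fin t ⊕ Fin s → MvPolynomial (Fin t ⊕ Fin s) k))) ^ d
      = Ideal.span (Set.range fun i : Fin s =>
          (X (Sum.inr i) : MvPolynomial (Fin t ⊕ Fin s) k)
            + rename Sum.inl (h' i))
        + (Ideal.span (Set.range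
            (X : Fin t ⊕ Fin s → MvPolynomial (Fin t ⊕ Fin s) k))) ^ d) :
    h = h' := by
  -- the evaluation map sending x_j ↦ x_j, y_i ↦ -h i
  set φ : MvPolynomial (Fin t ⊕ Fin s) k →+* MvPolynomial (Fin t) k :=
    (aeval (Sum.elim X (fun i => -(h i)))).toRingHom with hφ
  set m : Ideal (MvPolynomial (Fin t) k) :=
    Ideal.span (Set.range (X : Fin t → MvPolynomial (Fin t) k)) with hm
  -- LHS ideal maps into m^d under φ
  have key : Ideal.span (Set.range fun i : Fin s =>
          (X (Sum.inr i) : MvPolynomial (Fin t ⊕ Fin s) k)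
            + rename Sum.inl (h i))
        + (Ideal.span (Set.range
            (X : Fin t ⊕ Fin s → MvPolynomial (Fin t ⊕ Fin s) k))) ^ d
      ≤ Ideal.comap φ (m ^ d) := by
    apply sup_le
    · rw [Ideal.span_le]
      rintro _ ⟨i, rfl⟩
      have : φ ((X (Sum.inr i) : MvPolynomial (Fin t ⊕ Fin s) k) + rename Sum.inl (h i))
          = 0 := by
        simp only [hφ, map_add, AlgHom.toRingHom_eq_coe, RingHom.coe_coe, aeval_X,
          Sum.elim_inr, aeval_rename]
        have : (Sum.elim X (fun i => -(h i)) ∘ Sum.inl : Fin t → MvPolynomial (Fin t) k)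
            = X := rfl
        rw [this, aeval_X_left_apply]
        ring
      simp [Ideal.mem_comap, this]
    · rw [← Ideal.map_le_iff_le_comap, Ideal.map_pow]
      apply Ideal.pow_right_mono
      rw [Ideal.map_span]
      rw [Ideal.span_le]
      rintro _ ⟨_, ⟨v, rfl⟩, rfl⟩
      cases v with
      | inl j =>
        have hXj : φ (X (Sum.inl j)) = X j := by simp [hφ]
        rw [hXj]
        exact Ideal.subset_span ⟨j, rfl⟩
      | inr i =>
        simp only [hφ, AlgHom.toRingHom_eq_coe, RingHom.coe_coe, aeval_X, Sum.elim_inr]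
        exact neg_mem (mem_span_X_of_constantCoeff_eq_zero (h0 i))
  funext i
  -- the RHS generator lies in the LHS ideal
  have hmem : (X (Sum.inr i) : MvPolynomial (Fin t ⊕ Fin s) k) + rename Sum.inl (h' i)
      ∈ Ideal.comap φ (m ^ d) := by
    apply key
    rw [heq]
    exact Ideal.mem_sup_left (Ideal.subset_span ⟨i, rfl⟩)
  have hval : φ ((X (Sum.inr i) : MvPolynomial (Fin t ⊕ Fin s) k) + rename Sum.inl (h' i))
      = h' i - h i := by
    simp only [hφ, map_add, AlgHom.toRingHom_eq_coe, RingHom.coe_coe, aeval_X,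
      Sum.elim_inr, aeval_rename]
    have : (Sum.elim X (fun i => -(h i)) ∘ Sum.inl : Fin t → MvPolynomial (Fin t) k)
        = X := rfl
    rw [this, aeval_X_left_apply]
    ring
  rw [Ideal.mem_comap, hval] at hmem
  have hzero : h' i - h i = 0 := by
    ext n
    by_cases hn : (n.sum fun _ e => e) < d
    · simpa using coeff_eq_zero_of_mem_pow_span_X d hmem hn
    · have hdn : (h' i - h i).totalDegree ≤ d - 1 :=
        le_trans (totalDegree_sub _ _) (max_le (hdeg' i) (hdeg i))
      have : coeff n (h' i - h i) = 0 := by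
        by_contra hc
        have := le_totalDegree (mem_support_iff.mpr hc)
        omega
      simp [this]
  have := sub_eq_zero.mp hzero
  exact this.symm
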